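/- Let S be a semigroup with zero 0, and let I be the left socle of S. If S is right stable, then H_R(S) is finite if and only if H_R(S/I) is finite, in which case H_R(S) ≤ 2·H_R(S/I) + 1. -/

import Mathlib

namespace GreenHeights

universe u

section Defs

variable {S : Type u} [Semigroup S]

/-- Green's preorder `≤_L`: `a ≤_L b` iff `a = s * b` for some `s ∈ S¹`
(i.e. `a = b` or `a = s * b` for some `s ∈ S`). -/
def leL (a b : S) : Prop := a = b ∨ ∃ s : S, a = s * b

/-- Green's preorder `≤_R`: `a ≤_R b` iff `a = b * s` for some `s ∈ S¹`. -/
def leR (a b : S) : Prop := a = b ∨ ∃ s : S, a = b * s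

/-- Green's preorder `≤_J`: `a ≤_J b` iff `a = s * b * t` for some `s, t ∈ S¹`. -/
def leJ (a b : S) : Prop :=
  a = b ∨ (∃ s : S, a = s * b) ∨ (∃ t : S, a = b * t) ∨ ∃ s t : S, a = s * b * t

/-- Green's preorder `≤_H`. -/
def leH (a b : S) : Prop := leL a b ∧ leR a b

/-- Green's relation `L`. -/
def eqvL (a b : S) : Prop := leL a b ∧ leL b a

/-- Green's relation `R`. -/
def eqvR (a b : S) : Prop := leR a b ∧ leR b a

/-- Green's relation `J`. -/
def eqvJ (a b : S) : Prop := leJ a b ∧ leJ b a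

/-- Green's relation `H`. -/
def eqvH (a b : S) : Prop := leH a b ∧ leH b a

/-- `a <_L b`. -/
def ltL (a b : S) : Prop := leL a b ∧ ¬ leL b a

/-- `a <_R b`. -/
def ltR (a b : S) : Prop := leR a b ∧ ¬ leR b a

/-- `a <_J b`. -/
def ltJ (a b : S) : Prop := leJ a b ∧ ¬ leJ b a

/-- `a <_H b`. -/
def ltH (a b : S) : Prop := leH a b ∧ ¬ leH b a

end Defs

/-- The set of lengths of strictly decreasing chains with respect to a relation `lt`:
`m` is a chain length if there is a sequence `c 0 >' c 1 >' … >' c (m-1)`. -/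
def chainLengths {T : Type u} (lt : T → T → Prop) : Set ℕ :=
  {m | ∃ c : Fin m → T, ∀ i j : Fin m, i < j → lt (c j) (c i)}

/-- The height: the supremum, in `ℕ∞`, of the lengths of strictly decreasing chains. -/
noncomputable def heightOf {T : Type u} (lt : T → T → Prop) : ℕ∞ :=
  ⨆ m ∈ chainLengths lt, (m : ℕ∞)

/-- The `L`-height of a semigroup. -/
noncomputable def HL (S : Type u) [Semigroup S] : ℕ∞ := heightOf (ltL (S := S))

/-- The `R`-height of a semigroup. -/
noncomputable def HR (S : Type u) [Semigroup S] : ℕ∞ := heightOf (ltR (S := S))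

/-- The `J`-height of a semigroup. -/
noncomputable def HJ (S : Type u) [Semigroup S] : ℕ∞ := heightOf (ltJ (S := S))

/-- The `H`-height of a semigroup. -/
noncomputable def HH (S : Type u) [Semigroup S] : ℕ∞ := heightOf (ltH (S := S))

/-- `S` is left stable if `a ≤_L b` and `a J b` imply `a L b`. -/
def LeftStable (S : Type u) [Semigroup S] : Prop :=
  ∀ a b : S, leL a b → eqvJ a b → eqvL a b

/-- `S` is right stable if `a ≤_R b` and `a J b` imply `a R b`. -/
def RightStable (S : Type u) [Semigroup S] : Prop :=
  ∀ a b : S, leR a b → eqvJ a b → eqvR a b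

/-- `S` is stable if it is both left and right stable. -/
def Stable (S : Type u) [Semigroup S] : Prop := LeftStable S ∧ RightStable S

/-- A (two-sided) ideal of a semigroup, bundled. -/
structure SemigroupIdeal (S : Type u) [Semigroup S] where
  carrier : Set S
  nonempty : carrier.Nonempty
  mul_mem_left : ∀ (s : S) {a : S}, a ∈ carrier → s * a ∈ carrier
  mul_mem_right : ∀ (s : S) {a : S}, a ∈ carrier → a * s ∈ carrier

/-- The Rees quotient `S/I`: its carrier is `(S \ I) ∪ {0}`, where `none` plays the role
of the new zero `0`. -/
abbrev ReesQuotient {S : Type u} [Semigroup S] (I : SemigroupIdeal S) : Type u :=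
  Option {x : S // x ∉ I.carrier}

namespace ReesQuotient

variable {S : Type u} [Semigroup S] {I : SemigroupIdeal S}

open Classical in
/-- The natural projection `S → S/I`. -/
noncomputable def mk (I : SemigroupIdeal S) (x : S) : ReesQuotient I :=
  if h : x ∈ I.carrier then none else some ⟨x, h⟩

/-- Multiplication in the Rees quotient: `a · b = ab` if `a, b, ab ∈ S \ I`,
and `a · b = 0` otherwise. -/
noncomputable def rmul (I : SemigroupIdeal S) :
    ReesQuotient I → ReesQuotient I → ReesQuotient I
  | some x, some y => mk I (x.1 * y.1)
  | _, _ => none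

noncomputable instance : Mul (ReesQuotient I) := ⟨rmul I⟩

theorem none_mul (b : ReesQuotient I) : (none : ReesQuotient I) * b = none := by
  cases b <;> rfl

theorem mul_none (a : ReesQuotient I) : a * (none : ReesQuotient I) = none := by
  cases a <;> rfl

theorem mk_mul_some (a : S) (y : {x : S // x ∉ I.carrier}) :
    mk I a * (some y : ReesQuotient I) = mk I (a * y.1) := by
  by_cases h : a ∈ I.carrier
  · have h2 : a * y.1 ∈ I.carrier := I.mul_mem_right y.1 h
    simp only [mk, dif_pos h, dif_pos h2]
    exact none_mul _
  · simp only [mk, dif_neg h]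
    rfl

theorem some_mul_mk (x : {x : S // x ∉ I.carrier}) (b : S) :
    (some x : ReesQuotient I) * mk I b = mk I (x.1 * b) := by
  by_cases h : b ∈ I.carrier
  · have h2 : x.1 * b ∈ I.carrier := I.mul_mem_left x.1 h
    simp only [mk, dif_pos h, dif_pos h2]
    exact mul_none _
  · simp only [mk, dif_neg h]
    rfl

noncomputable instance : Semigroup (ReesQuotient I) where
  mul_assoc a b c := by
    rcases a with _ | x
    · rw [none_mul, none_mul, none_mul]
    rcases b with _ | y
    · rw [mul_none, none_mul, mul_none]
    rcases c with _ | z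
    · rw [mul_none, mul_none, mul_none]
    · show mk I (x.1 * y.1) * some z = some x * mk I (y.1 * z.1)
      rw [mk_mul_some, some_mul_mk, mul_assoc]

end ReesQuotient

/-- The left socle of a semigroup with zero `z`: the union of `{z}` and all `0`-minimal
`L`-classes. -/
def leftSocle {S : Type u} [Semigroup S] (z : S) : Set S :=
  {a : S | a = z ∨ ∀ b : S, ltL b a → b = z}

section MainProof

variable {S : Type u} [Semigroup S]

theorem leR_refl (a : S) : leR a a := Or.inl rfl

theorem leR_trans {a b c : S} (h1 : leR a b) (h2 : leR b c) : leR a c := by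
  rcases h1 with rfl | ⟨s, rfl⟩
  · exact h2
  · rcases h2 with rfl | ⟨t, rfl⟩
    · exact Or.inr ⟨s, rfl⟩
    · exact Or.inr ⟨t * s, mul_assoc c t s⟩

theorem leR_leJ {a b : S} (h : leR a b) : leJ a b := by
  rcases h with rfl | ⟨s, rfl⟩
  · exact Or.inl rfl
  · exact Or.inr (Or.inr (Or.inl ⟨s, rfl⟩))

theorem leR_zero {z : S} (hz : ∀ s : S, z * s = z ∧ s * z = z) (a : S) : leR z a :=
  Or.inr ⟨z, ((hz a).2).symm⟩

theorem eq_zero_of_leR_zero {z : S} (hz : ∀ s : S, z * s = z ∧ s * z = z) {a : S}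
    (h : leR a z) : a = z := by
  rcases h with rfl | ⟨s, rfl⟩
  · rfl
  · exact (hz s).1

/-- 0-minimality: if `x` is in the left socle and `x ≠ z`, anything `L`-below `x`
that is nonzero is `L`-above `x` as well. -/
theorem leL_back {z x : S} (hx : x ∈ leftSocle z) (hxz : x ≠ z) {u : S}
    (hu : leL u x) (hunz : u ≠ z) : leL x u := by
  rcases hx with h | h
  · exact absurd h hxz
  · by_contra hn
    exact hunz (h u ⟨hu, hn⟩)

/-- The key lemma: if `b₁` is a nonzero element of the left socle and `b₂ <_R b₁`,
then `b₂ * t = z` for every `t` in the left socle. -/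
theorem Zstar {z : S} (hz : ∀ s : S, z * s = z ∧ s * z = z) (hst : RightStable S)
    (I : SemigroupIdeal S) (hI : I.carrier = leftSocle z)
    {b₁ b₂ t : S} (hb₁I : b₁ ∈ I.carrier) (hb₁z : b₁ ≠ z)
    (h21 : leR b₂ b₁) (h12 : ¬ leR b₁ b₂)
    (htI : t ∈ I.carrier) (hnz : b₂ * t ≠ z) : False := by
  have htz : t ≠ z := by rintro rfl; exact hnz (hz b₂).2
  have hty : leL t (b₂ * t) := leL_back (hI ▸ htI) htz (Or.inr ⟨b₂, rfl⟩) hnz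
  obtain ⟨E, hEy, hEb₂⟩ : ∃ E : S, E * (b₂ * t) = b₂ * t ∧ leR E b₂ := by
    rcases hty with h | ⟨w, hw⟩
    · exact ⟨b₂, by rw [← h]; exact h.symm, leR_refl b₂⟩
    · exact ⟨b₂ * w, by rw [mul_assoc, ← hw], Or.inr ⟨w, rfl⟩⟩
  have hEb₁ : leR E b₁ := leR_trans hEb₂ h21
  have hEzero : E * b₁ = z := by
    by_contra hne
    have h2 : leL b₁ (E * b₁) := leL_back (hI ▸ hb₁I) hb₁z (Or.inr ⟨E, rfl⟩) hne
    have hJ1 : leJ b₁ E := by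
      rcases h2 with h | ⟨w, hw⟩
      · exact Or.inr (Or.inr (Or.inl ⟨b₁, h⟩))
      · exact Or.inr (Or.inr (Or.inr ⟨w, b₁, by rw [mul_assoc]; exact hw⟩))
    have hR := hst E b₁ hEb₁ ⟨leR_leJ hEb₁, hJ1⟩
    exact h12 (leR_trans hR.2 hEb₂)
  obtain ⟨s₁, hs₁⟩ : ∃ s₁, b₂ = b₁ * s₁ := by
    rcases h21 with h | hs
    · exact absurd (Or.inl h.symm) h12
    · exact hs
  have hdI : s₁ * t ∈ I.carrier := I.mul_mem_left s₁ htI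
  have hyd : b₁ * (s₁ * t) = b₂ * t := by rw [← mul_assoc, ← hs₁]
  have hdz : s₁ * t ≠ z := by
    rintro h; exact hnz (by rw [← hyd, h, (hz b₁).2])
  have hdy : leL (s₁ * t) (b₂ * t) :=
    leL_back (hI ▸ hdI) hdz (by rw [← hyd]; exact Or.inr ⟨b₁, rfl⟩) hnz
  obtain ⟨f, hfy, hfz⟩ : ∃ f : S, f * (b₂ * t) = b₂ * t ∧ E * f = z := by
    rcases hdy with h | ⟨δ, hδ⟩
    · exact ⟨b₁, by rw [← h, hyd]; exact h.symm, hEzero⟩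
    · refine ⟨b₁ * δ, ?_, ?_⟩
      · rw [mul_assoc, ← hδ, hyd]
      · rw [← mul_assoc, hEzero, (hz δ).1]
  have hfin : z * (b₂ * t) = b₂ * t := by
    rw [← hfz, mul_assoc, hfy, hEy]
  exact hnz (hfin.symm.trans (hz (b₂ * t)).1)

end MainProof
section QuotLemmas

variable {S : Type u} [Semigroup S] {I : SemigroupIdeal S}

open ReesQuotient

theorem mk_eq_none {x : S} (h : x ∈ I.carrier) : mk I x = none := dif_pos h

theorem mk_of_not_mem {x : S} (h : x ∉ I.carrier) : mk I x = some ⟨x, h⟩ := dif_neg h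

theorem mk_mul (a b : S) : mk I (a * b) = mk I a * mk I b := by
  by_cases ha : a ∈ I.carrier
  · rw [mk_eq_none (I.mul_mem_right b ha), mk_eq_none ha, none_mul]
  · by_cases hb : b ∈ I.carrier
    · rw [mk_eq_none (I.mul_mem_left a hb), mk_of_not_mem ha, mk_eq_none hb, mul_none]
    · rw [mk_of_not_mem ha, mk_of_not_mem hb]; rfl

theorem leR_mk {a b : S} (h : leR a b) : leR (mk I a) (mk I b) := by
  rcases h with rfl | ⟨s, rfl⟩
  · exact Or.inl rfl
  · exact Or.inr ⟨mk I s, mk_mul b s⟩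

theorem mk_inj {a b : S} (ha : a ∉ I.carrier) (hb : b ∉ I.carrier)
    (h : mk I a = mk I b) : a = b := by
  rw [mk_of_not_mem ha, mk_of_not_mem hb] at h
  exact Subtype.ext_iff.1 (Option.some.inj h)

theorem leR_of_mk {a b : S} (ha : a ∉ I.carrier) (hb : b ∉ I.carrier)
    (h : leR (mk I a) (mk I b)) : leR a b := by
  rcases h with h | ⟨s, hs⟩
  · exact Or.inl (mk_inj ha hb h)
  · cases s with
    | none =>
      rw [mul_none, mk_of_not_mem ha] at hs
      exact absurd hs (Option.some_ne_none _)
    | some u =>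
      rw [mk_of_not_mem hb] at hs
      have hrw : (some ⟨b, hb⟩ : ReesQuotient I) * some u = mk I (b * u.1) := rfl
      rw [hrw] at hs
      by_cases hbu : b * u.1 ∈ I.carrier
      · rw [mk_eq_none hbu, mk_of_not_mem ha] at hs
        exact absurd hs (Option.some_ne_none _)
      · exact Or.inr ⟨u.1, mk_inj ha hbu hs⟩

theorem ltR_mk {a b : S} (ha : a ∉ I.carrier) (hb : b ∉ I.carrier) (h : ltR a b) :
    ltR (mk I a) (mk I b) := ⟨leR_mk h.1, fun hh => h.2 (leR_of_mk hb ha hh)⟩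

theorem leR_none (q : ReesQuotient I) : leR (none : ReesQuotient I) q :=
  Or.inr ⟨none, (mul_none q).symm⟩

theorem eq_none_of_leR {q : ReesQuotient I} (h : leR q (none : ReesQuotient I)) :
    q = none := by
  rcases h with rfl | ⟨s, hs⟩
  · rfl
  · rw [none_mul] at hs; exact hs

theorem ltR_none_mk {x : S} (hx : x ∉ I.carrier) : ltR (none : ReesQuotient I) (mk I x) := by
  refine ⟨leR_none _, fun hh => ?_⟩
  have := eq_none_of_leR hh
  rw [mk_of_not_mem hx] at this
  exact Option.some_ne_none _ this

end QuotLemmas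

section HeightLemmas

theorem le_heightOf {T : Type u} {lt : T → T → Prop} {m : ℕ} (h : m ∈ chainLengths lt) :
    (m : ℕ∞) ≤ heightOf lt :=
  le_iSup₂ (f := fun (m : ℕ) (_ : m ∈ chainLengths lt) => (m : ℕ∞)) m h

theorem heightOf_le {T : Type u} {lt : T → T → Prop} {C : ℕ∞}
    (h : ∀ m ∈ chainLengths lt, (m : ℕ∞) ≤ C) : heightOf lt ≤ C := iSup₂_le h

theorem one_mem_chainLengths {T : Type u} (x : T) (lt : T → T → Prop) :
    1 ∈ chainLengths lt := by
  refine ⟨fun _ => x, ?_⟩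
  intro i j hij
  have hi := i.isLt
  have hj := j.isLt
  rw [Fin.lt_def] at hij
  omega

/-- Mapping a strict chain of elements outside `I` into the Rees quotient,
appending the zero at the bottom. -/
theorem mkChain {S : Type u} [Semigroup S] {I : SemigroupIdeal S} {r : ℕ} (d : Fin r → S)
    (hchain : ∀ i j : Fin r, i < j → ltR (d j) (d i))
    (hout : ∀ i, d i ∉ I.carrier) :
    (r + 1) ∈ chainLengths (ltR (S := ReesQuotient I)) := by
  refine ⟨fun i => if h : (i : ℕ) < r then ReesQuotient.mk I (d ⟨i, h⟩) else none, ?_⟩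
  intro i j hij
  dsimp only
  rw [Fin.lt_def] at hij
  by_cases hj : (j : ℕ) < r
  · have hi : (i : ℕ) < r := hij.trans hj
    rw [dif_pos hi, dif_pos hj]
    exact ltR_mk (hout _) (hout _) (hchain ⟨i, hi⟩ ⟨j, hj⟩ (by rw [Fin.lt_def]; exact hij))
  · have hi : (i : ℕ) < r := by have := j.isLt; omega
    rw [dif_pos hi, dif_neg hj]
    exact ltR_none_mk (hout _)

end HeightLemmas
section SocChain

variable {S : Type u} [Semigroup S]

/-- From a strict `R`-chain of `n ≥ 3` nonzero elements of the left socle, one obtains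
a strict `R`-chain of length `n - 1` in the Rees quotient. -/
theorem socChain {z : S} (hz : ∀ s : S, z * s = z ∧ s * z = z) (hst : RightStable S)
    (I : SemigroupIdeal S) (hI : I.carrier = leftSocle z)
    {n : ℕ} (hn : 3 ≤ n) (b : Fin n → S)
    (hchain : ∀ i j : Fin n, i < j → ltR (b j) (b i))
    (hin : ∀ i, b i ∈ I.carrier) (hbnz : ∀ i, b i ≠ z) :
    (n - 1) ∈ chainLengths (ltR (S := ReesQuotient I)) := by
  have wit : ∀ (j : ℕ) (h : j + 1 < n), ∃ s : S, b ⟨j + 1, h⟩ = b ⟨j, by omega⟩ * s := by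
    intro j h
    have hlt := hchain ⟨j, by omega⟩ ⟨j + 1, h⟩ (by exact Fin.mk_lt_mk.mpr (by omega))
    rcases hlt.1 with he | hs
    · exact absurd (Or.inl he.symm) hlt.2
    · exact hs
  set σ : ℕ → S := fun j => if h : j + 1 < n then Classical.choose (wit j h) else z with hσ
  have σspec : ∀ (j : ℕ) (h : j + 1 < n), b ⟨j + 1, h⟩ = b ⟨j, by omega⟩ * σ j := by
    intro j h
    rw [hσ]; dsimp only; rw [dif_pos h]
    exact Classical.choose_spec (wit j h)
  set X : ℕ → S := fun j => Nat.rec (σ 1) (fun i ih => ih * σ (i + 2)) j with hX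
  have hX0 : X 0 = σ 1 := rfl
  have hXsucc : ∀ j, X (j + 1) = X j * σ (j + 2) := fun j => rfl
  have hInv : ∀ (j : ℕ) (h : j + 2 < n), b ⟨1, by omega⟩ * X j = b ⟨j + 2, h⟩ := by
    intro j
    induction j with
    | zero =>
      intro h
      rw [hX0]
      exact (σspec 1 h).symm
    | succ i ih =>
      intro h
      have h2 : i + 2 < n := by omega
      rw [hXsucc, ← mul_assoc, ih h2]
      exact (σspec (i + 2) (by omega)).symm
  have hXout : ∀ (j : ℕ), j + 2 < n → X j ∉ I.carrier := by
    intro j hj hXI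
    have h01 := hchain ⟨0, by omega⟩ ⟨1, by omega⟩ (by exact Fin.mk_lt_mk.mpr (by omega))
    refine Zstar hz hst I hI (hin ⟨0, by omega⟩) (hbnz ⟨0, by omega⟩) h01.1 h01.2 hXI ?_
    rw [hInv j hj]
    exact hbnz _
  have hXle : ∀ (k i : ℕ), leR (X (i + k)) (X i) := by
    intro k
    induction k with
    | zero => intro i; exact leR_refl _
    | succ kk ih =>
      intro i
      exact leR_trans (Or.inr ⟨σ (i + kk + 2), hXsucc (i + kk)⟩) (ih i)
  have hXchain : ∀ (i j : ℕ), i < j → j + 2 < n → ltR (X j) (X i) := by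
    intro i j hij hj
    constructor
    · have hrw : j = i + (j - i) := by omega
      rw [hrw]
      exact hXle _ _
    · intro hle
      have hbi : b ⟨1, by omega⟩ * X i = b ⟨i + 2, by omega⟩ := hInv i (by omega)
      have hbj : b ⟨1, by omega⟩ * X j = b ⟨j + 2, by omega⟩ := hInv j hj
      have hR : leR (b ⟨i + 2, by omega⟩) (b ⟨j + 2, by omega⟩) := by
        rcases hle with he | ⟨v, hv⟩
        · rw [← hbi, ← hbj, he]
          exact leR_refl _
        · refine Or.inr ⟨v, ?_⟩
          rw [← hbi, hv, ← mul_assoc, hbj]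
      exact (hchain ⟨i + 2, by omega⟩ ⟨j + 2, by omega⟩ (by exact Fin.mk_lt_mk.mpr (by omega))).2 hR
  have h := mkChain (I := I) (r := n - 2) (fun i => X i)
    (by
      intro i j hij
      rw [Fin.lt_def] at hij
      exact hXchain i j hij (by have := j.isLt; omega))
    (by
      intro i
      exact hXout i (by have := i.isLt; omega))
  have hrw : n - 2 + 1 = n - 1 := by omega
  rwa [hrw] at h

end SocChain
section Final

variable {S : Type u} [Semigroup S]

open ReesQuotient

theorem quot_height_le {z : S} (hz : ∀ s : S, z * s = z ∧ s * z = z)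
    (I : SemigroupIdeal S) (hI : I.carrier = leftSocle z) :
    HR (ReesQuotient I) ≤ HR S := by
  apply heightOf_le
  intro n hn
  apply le_heightOf
  obtain ⟨e, he⟩ := hn
  refine ⟨fun i => (e i).elim z (·.1), ?_⟩
  intro i j hij
  have hlt := he i j hij
  dsimp only
  cases hei : e i with
  | none =>
    rw [hei] at hlt
    have hj := eq_none_of_leR hlt.1
    rw [hj] at hlt
    exact absurd (leR_refl _) hlt.2
  | some x =>
    cases hej : e j with
    | none =>
      rw [hei, hej] at hlt
      rw [Option.elim, Option.elim]
      constructor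
      · exact leR_zero hz _
      · intro hle
        have hxz : x.1 = z := eq_zero_of_leR_zero hz hle
        exact x.2 (by rw [hxz, hI]; exact Or.inl rfl)
    | some y =>
      rw [hei, hej] at hlt
      rw [Option.elim, Option.elim]
      constructor
      · rcases hlt.1 with he2 | ⟨s, hs⟩
        · exact Or.inl (congrArg Subtype.val (Option.some.inj he2))
        · cases s with
          | none =>
            rw [mul_none] at hs
            exact absurd hs (Option.some_ne_none _)
          | some u =>
            have hrw : (some x : ReesQuotient I) * some u = mk I (x.1 * u.1) := rfl
            rw [hrw] at hs
            by_cases hxu : x.1 * u.1 ∈ I.carrier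
            · rw [mk_eq_none hxu] at hs
              exact absurd hs (Option.some_ne_none _)
            · rw [mk_of_not_mem hxu] at hs
              exact Or.inr ⟨u.1, congrArg Subtype.val (Option.some.inj hs)⟩
      · intro hle
        have hmm := leR_mk (I := I) hle
        rw [mk_of_not_mem x.2, mk_of_not_mem y.2] at hmm
        exact hlt.2 hmm

theorem main_bound_aux {z : S} (hz : ∀ s : S, z * s = z ∧ s * z = z) (hst : RightStable S)
    (I : SemigroupIdeal S) (hI : I.carrier = leftSocle z)
    {m : ℕ} (c : Fin m → S) (hc : ∀ i j : Fin m, i < j → ltR (c j) (c i))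
    (hone : (1 : ℕ∞) ≤ HR (ReesQuotient I)) (hm1 : 0 < m)
    (m' : ℕ) (hm'le : m' ≤ m) (hm'ge : m ≤ m' + 1)
    (hnz' : ∀ (i : ℕ) (h : i < m'), c ⟨i, by omega⟩ ≠ z)
    (htail : ∀ (i : ℕ), m' ≤ i → ∀ (h : i < m), c ⟨i, h⟩ ∈ I.carrier) :
    (m : ℕ∞) ≤ 2 * HR (ReesQuotient I) + 1 := by
  classical
  set A := {i : ℕ | m' ≤ i ∨ ∃ h : i < m, c ⟨i, h⟩ ∈ I.carrier} with hA
  set k := sInf A with hk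
  have hm'A : m' ∈ A := Or.inl le_rfl
  have hkle : k ≤ m' := Nat.sInf_le hm'A
  have hout : ∀ (i : ℕ) (h : i < k), c ⟨i, by omega⟩ ∉ I.carrier := by
    intro i h hin
    have hiA : i ∈ A := Or.inr ⟨by omega, hin⟩
    have := Nat.sInf_le hiA
    omega
  have hIdown : ∀ {a b : S}, leR a b → b ∈ I.carrier → a ∈ I.carrier := by
    intro a b hab hb
    rcases hab with rfl | ⟨s, rfl⟩
    · exact hb
    · exact I.mul_mem_right s hb
  have hkin : ∀ (i : ℕ) (h : i < m), k ≤ i → c ⟨i, h⟩ ∈ I.carrier := by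
    intro i h hki
    rcases Nat.lt_or_ge i m' with him' | him'
    · have hkA : k ∈ A := Nat.sInf_mem ⟨m', hm'A⟩
      rcases hkA with hk1 | ⟨hk2, hk3⟩
      · omega
      · by_cases heq : i = k
        · subst heq; exact hk3
        · have hlt := hc ⟨k, hk2⟩ ⟨i, h⟩ (Fin.mk_lt_mk.mpr (by omega))
          exact hIdown hlt.1 hk3
    · exact htail i him' h
  have hpref : (k + 1) ∈ chainLengths (ltR (S := ReesQuotient I)) := by
    refine mkChain (I := I) (fun i : Fin k => c ⟨i.1, by have := i.isLt; omega⟩) ?_ ?_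
    · intro i j hij
      rw [Fin.lt_def] at hij
      exact hc _ _ (Fin.mk_lt_mk.mpr (by omega))
    · intro i
      exact hout i.1 i.isLt
  have hprefH : ((k + 1 : ℕ) : ℕ∞) ≤ HR (ReesQuotient I) := le_heightOf hpref
  set l₁ := m' - k with hl₁
  have hsoc : ((l₁ : ℕ) : ℕ∞) ≤ HR (ReesQuotient I) + 1 := by
    rcases Nat.lt_or_ge l₁ 3 with h3 | h3
    · have h4 : ((l₁ : ℕ) : ℕ∞) ≤ ((2 : ℕ) : ℕ∞) := by
        exact_mod_cast Nat.cast_le.2 (show l₁ ≤ 2 by omega)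
      refine h4.trans ?_
      have : ((2 : ℕ) : ℕ∞) = 1 + 1 := by norm_num
      rw [this]
      exact add_le_add hone (le_refl 1)
    · have hsc := socChain hz hst I hI (n := l₁) h3
        (fun i : Fin l₁ => c ⟨k + i.1, by have := i.isLt; omega⟩)
        (by
          intro i j hij
          rw [Fin.lt_def] at hij
          exact hc _ _ (Fin.mk_lt_mk.mpr (by omega)))
        (by
          intro i
          exact hkin (k + i.1) (by have := i.isLt; omega) (by omega))
        (by
          intro i
          exact hnz' (k + i.1) (by have := i.isLt; omega))
      have hQ : ((l₁ - 1 : ℕ) : ℕ∞) ≤ HR (ReesQuotient I) := le_heightOf hsc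
      obtain ⟨p, hp⟩ : ∃ p, l₁ = p + 1 := ⟨l₁ - 1, by omega⟩
      rw [hp] at hQ ⊢
      rw [Nat.add_sub_cancel] at hQ
      push_cast
      exact add_le_add hQ (le_refl 1)
  calc (m : ℕ∞) ≤ (((k + 1) + l₁ : ℕ) : ℕ∞) := Nat.cast_le.2 (by omega)
    _ = ((k + 1 : ℕ) : ℕ∞) + ((l₁ : ℕ) : ℕ∞) := by push_cast; ring
    _ ≤ HR (ReesQuotient I) + (HR (ReesQuotient I) + 1) := add_le_add hprefH hsoc
    _ = 2 * HR (ReesQuotient I) + 1 := by rw [two_mul, add_assoc]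

theorem main_bound {z : S} (hz : ∀ s : S, z * s = z ∧ s * z = z) (hst : RightStable S)
    (I : SemigroupIdeal S) (hI : I.carrier = leftSocle z) :
    ∀ m ∈ chainLengths (ltR (S := S)), (m : ℕ∞) ≤ 2 * HR (ReesQuotient I) + 1 := by
  intro m hm
  obtain ⟨c, hc⟩ := hm
  have hone : (1 : ℕ∞) ≤ HR (ReesQuotient I) := by
    have h1 := one_mem_chainLengths (none : ReesQuotient I) (ltR (S := ReesQuotient I))
    exact_mod_cast le_heightOf h1
  rcases Nat.eq_zero_or_pos m with rfl | hm1
  · simp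
  have hz_last : ∀ (i : ℕ) (h : i < m), i + 1 < m → c ⟨i, h⟩ ≠ z := by
    intro i h h1 hcz
    have hlt := hc ⟨i, h⟩ ⟨i + 1, h1⟩ (Fin.mk_lt_mk.mpr (by omega))
    have h2 : c ⟨i + 1, h1⟩ = z := eq_zero_of_leR_zero hz (hcz ▸ hlt.1)
    exact hlt.2 (by rw [h2, hcz]; exact leR_refl z)
  by_cases hlast : c ⟨m - 1, by omega⟩ = z
  · exact main_bound_aux hz hst I hI c hc hone hm1 (m - 1) (by omega) (by omega)
      (fun i h => hz_last i (by omega) (by omega))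
      (fun i hge h => by
        have hieq : i = m - 1 := by omega
        subst hieq
        rw [hlast, hI]; exact Or.inl rfl)
  · exact main_bound_aux hz hst I hI c hc hone hm1 m le_rfl (by omega)
      (fun i h => by
        rcases Nat.lt_or_ge i (m - 1) with h2 | h2
        · exact hz_last i (by omega) (by omega)
        · have hieq : i = m - 1 := by omega
          subst hieq
          exact hlast)
      (fun i hge h => by omega)

end Final

/-- For a right stable semigroup `S` with zero `z`, and `I` the left
socle of `S`: `H_R(S)` is finite iff `H_R(S/I)` is finite, in which case
`H_R(S) ≤ 2·H_R(S/I) + 1`. -/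
theorem R_height_and_left_socle (S : Type u) [Semigroup S] (z : S)
    (hz : ∀ s : S, z * s = z ∧ s * z = z)
    (hst : RightStable S)
    (I : SemigroupIdeal S) (hI : I.carrier = leftSocle z) :
    (HR S < ⊤ ↔ HR (ReesQuotient I) < ⊤) ∧
    (HR S < ⊤ → HR S ≤ 2 * HR (ReesQuotient I) + 1) := by
  have hbound : HR S ≤ 2 * HR (ReesQuotient I) + 1 := heightOf_le (main_bound hz hst I hI)
  have hA : HR (ReesQuotient I) ≤ HR S := quot_height_le hz I hI
  refine ⟨⟨fun h => lt_of_le_of_lt hA h, fun h => lt_of_le_of_lt hbound ?_⟩, fun _ => hbound⟩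
  obtain ⟨n, hn⟩ := WithTop.ne_top_iff_exists.1 h.ne
  rw [← hn]
  calc (2 : ℕ∞) * (n : ℕ∞) + 1 = ((2 * n + 1 : ℕ) : ℕ∞) := by push_cast; ring
    _ < ⊤ := lt_top_iff_ne_top.2 WithTop.coe_ne_top

end GreenHeights
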